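/- arXiv:1707.01850 — 2 statements merged into one kernel-verified Lean document; each statement's English description precedes it below -/
import Mathlib

section
/- Let r ≥ 1 be an integer, d > 0 and η > 0 real numbers, φ : ℝ^r → ℂ a Schwartz function with Fourier transform φ̂, and for each integer q ≥ 1 let Ψ_q : ℤ^r → ℂ be a function with |Ψ_q| ≤ 1 that factors through ℤ^r → (ℤ/qℤ)^r, with normalized finite Fourier transform Ψ̂_q. For X > 0 and Z > 0 define E_{>Z}(X,q) := X^{r/d} · ∑ Ψ̂_q(x)·φ̂(x·X^{1/d}/q), the sum over x ∈ ℤ^r having some coordinate of absolute value exceeding Z. Then for every B > 0 there is a constant C depending only on B, η, r, d, and φ such that for all X ≥ 2 and all integers 1 ≤ q < X, taking Z := q·X^{−1/d+η}, one has |E_{>Z}(X,q)| ≤ C·X^{−B}. -/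
open scoped Classical

/-- The normalized finite Fourier transform of a function `Ψ : ℤ^r → ℂ` that factors
through the reduction map `ℤ^r → (ℤ/qℤ)^r`:
`Ψ̂(w) = q^{-r} ∑_{v ∈ (ℤ/qℤ)^r} Ψ(v) exp(2πi⟨v,w⟩/q)`. -/
noncomputable def fourierZ (r q : ℕ) (Ψ : (Fin r → ℤ) → ℂ) (w : Fin r → ℤ) : ℂ :=
  (q : ℂ) ^ (-(r : ℤ)) *
    ∑ v ∈ Fintype.piFinset (fun _ : Fin r => Finset.range q),
      Ψ (fun i => (v i : ℤ)) *
        Complex.exp (2 * Real.pi * Complex.I * (∑ i, (v i : ℂ) * (w i : ℂ)) / q)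

lemma coord_abs_le_norm {r : ℕ} (v : EuclideanSpace ℝ (Fin r)) (i : Fin r) :
    |v i| ≤ ‖v‖ := by
  rw [EuclideanSpace.norm_eq, ← Real.sqrt_sq (abs_nonneg (v i))]
  apply Real.sqrt_le_sqrt
  have := Finset.single_le_sum (f := fun j => ‖v j‖ ^ 2)
    (fun j _ => sq_nonneg _) (Finset.mem_univ i)
  simpa [Real.norm_eq_abs, sq_abs] using this

lemma abs_fourierZ_le_one {r q : ℕ} (hq : 1 ≤ q) (Ψ : (Fin r → ℤ) → ℂ)
    (hΨ : ∀ x, ‖Ψ x‖ ≤ 1) (w : Fin r → ℤ) :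
    ‖fourierZ r q Ψ w‖ ≤ 1 := by
  have hq0 : (0:ℝ) < q := by exact_mod_cast hq
  unfold fourierZ
  rw [norm_mul]
  have h1 : ‖(q:ℂ) ^ (-(r:ℤ))‖ = (q:ℝ) ^ (-(r:ℤ)) := by
    rw [norm_zpow, Complex.norm_natCast]
  have h2 : ‖∑ v ∈ Fintype.piFinset (fun _ : Fin r => Finset.range q),
      Ψ (fun i => (v i : ℤ)) *
        Complex.exp (2 * Real.pi * Complex.I * (∑ i, (v i : ℂ) * (w i : ℂ)) / q)‖ ≤
      (q : ℝ) ^ r := by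
    refine le_trans (norm_sum_le _ _) ?_
    have hcard : (Fintype.piFinset (fun _ : Fin r => Finset.range q)).card = q ^ r := by
      simp [Fintype.card_piFinset]
    calc ∑ v ∈ Fintype.piFinset (fun _ : Fin r => Finset.range q),
          ‖Ψ (fun i => (v i : ℤ)) *
            Complex.exp (2 * Real.pi * Complex.I * (∑ i, (v i : ℂ) * (w i : ℂ)) / q)‖
        ≤ ∑ _v ∈ Fintype.piFinset (fun _ : Fin r => Finset.range q), 1 := by
          refine Finset.sum_le_sum fun v _ => ?_
          rw [norm_mul]
          have hexp : ‖Complex.exp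
              (2 * Real.pi * Complex.I * (∑ i, (v i : ℂ) * (w i : ℂ)) / q)‖ = 1 := by
            have : (2 * (Real.pi:ℂ) * Complex.I * (∑ i, (v i : ℂ) * (w i : ℂ)) / q)
                = ((2 * Real.pi * (∑ i, (v i : ℝ) * (w i : ℝ)) / q : ℝ) : ℂ) * Complex.I := by
              push_cast
              ring
            rw [this, Complex.norm_exp_ofReal_mul_I]
          rw [hexp, mul_one]
          exact hΨ _
      _ = (q : ℝ) ^ r := by
          rw [Finset.sum_const, hcard]
          simp
  calc ‖(q:ℂ) ^ (-(r:ℤ))‖ * ‖∑ v ∈ _, _‖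
      ≤ (q:ℝ) ^ (-(r:ℤ)) * (q:ℝ) ^ r := by
        rw [h1]
        exact mul_le_mul_of_nonneg_left h2 (zpow_nonneg hq0.le _)
    _ = 1 := by
        rw [zpow_neg, ← zpow_natCast (q:ℝ) r]
        field_simp

lemma summable_pi_prod : ∀ (n : ℕ) (f : ℤ → ℝ), (∀ m, 0 ≤ f m) → Summable f →
    Summable (fun x : Fin n → ℤ => ∏ i, f (x i)) := by
  intro n
  induction n with
  | zero =>
      intro f _ _
      exact Summable.of_finite
  | succ n ih =>
      intro f hf0 hf
      have h : Summable (fun p : ℤ × (Fin n → ℤ) => f p.1 * ∏ i, f (p.2 i)) := by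
        apply Summable.mul_of_nonneg hf (ih f hf0 hf)
        · exact Pi.le_def.mpr hf0
        · exact Pi.le_def.mpr fun x => Finset.prod_nonneg fun i _ => hf0 _
      have hinj : Function.Injective
          (fun x : Fin (n+1) → ℤ => ((x 0, fun i => x i.succ) : ℤ × (Fin n → ℤ))) := by
        intro a b hab
        simp only [Prod.mk.injEq] at hab
        funext i
        refine Fin.cases ?_ ?_ i
        · exact hab.1
        · intro j
          exact congrFun hab.2 j
      have := h.comp_injective hinj
      refine this.congr fun x => ?_
      simp only [Function.comp_apply]
      exact (Fin.prod_univ_succ fun i => f (x i)).symm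

lemma summable_one_int : Summable (fun m : ℤ => ((1 + |(m:ℝ)|) ^ 2)⁻¹) := by
  have hnat : Summable (fun n : ℕ => ((1 + (n:ℝ)) ^ 2)⁻¹) := by
    have h := (summable_nat_add_iff (f := fun n : ℕ => 1 / (n:ℝ) ^ 2) 1).mpr
      (Real.summable_one_div_nat_pow.mpr one_lt_two)
    refine h.congr fun n => ?_
    push_cast
    rw [one_div]
    ring_nf
  apply Summable.of_nat_of_neg
  · refine hnat.congr fun n => ?_
    simp [abs_of_nonneg (show (0:ℝ) ≤ ((n:ℕ):ℝ) by positivity)]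
  · refine hnat.congr fun n => ?_
    simp [abs_of_nonneg (show (0:ℝ) ≤ ((n:ℕ):ℝ) by positivity)]

/-- With the choice `Z = q·X^{-1/d+η}`, the tail `E_{>Z}` of the Poisson-summation
error term is `O_B(X^{-B})` for every `B > 0`, uniformly over `1 ≤ q < X`. -/
theorem tail_bound_negligible
    (r : ℕ) (hr : 1 ≤ r) (d : ℝ) (hd : 0 < d) (η : ℝ) (hη : 0 < η)
    (φ : SchwartzMap (EuclideanSpace ℝ (Fin r)) ℂ)
    (B : ℝ) (hB : 0 < B) :
    ∃ C : ℝ, 0 < C ∧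
      ∀ X : ℝ, 2 ≤ X → ∀ q : ℕ, 1 ≤ q → (q : ℝ) < X →
      ∀ Ψ : (Fin r → ℤ) → ℂ,
        (∀ x, ‖Ψ x‖ ≤ 1) →
        (∀ x y : Fin r → ℤ, (∀ i, (q : ℤ) ∣ x i - y i) → Ψ x = Ψ y) →
        ‖(X ^ ((r : ℝ) / d) : ℝ) *
            ∑' x : Fin r → ℤ,
              if ∃ i, (q : ℝ) * X ^ (-(1 / d) + η) < |(x i : ℝ)| then
                fourierZ r q Ψ x *
                  FourierTransform.fourier (⇑φ : EuclideanSpace ℝ (Fin r) → ℂ)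
                    ((WithLp.toLp 2 (fun i => (x i : ℝ) * X ^ (1 / d) / q) : EuclideanSpace ℝ (Fin r)))
              else 0‖
          ≤ C * X ^ (-B) := by
  -- the Schwartz decay constant
  set N : ℕ := ⌈(B + (r:ℝ)/d + 2*r)/η⌉₊ with hNdef
  have hN : B + (r:ℝ)/d + 2*r ≤ η * N := by
    have h1 : (B + (r:ℝ)/d + 2*r)/η ≤ N := Nat.le_ceil _
    have h2 : η * ((B + (r:ℝ)/d + 2*r)/η) = B + (r:ℝ)/d + 2*r :=
      mul_div_cancel₀ _ (ne_of_gt hη)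
    have h3 := mul_le_mul_of_nonneg_left h1 hη.le
    linarith
  obtain ⟨C0, hC0pos, hC0⟩ := (SchwartzMap.fourierTransformCLM ℝ φ).decay (N + 2*r) 0
  -- summable majorant
  set f : ℤ → ℝ := fun m => ((1 + |(m:ℝ)|) ^ 2)⁻¹ with hfdef
  have hf0 : ∀ m, 0 ≤ f m := fun m => by positivity
  set g : (Fin r → ℤ) → ℝ := fun x => ∏ i, f (x i) with hgdef
  have hg0 : ∀ x, 0 ≤ g x := fun x => Finset.prod_nonneg fun i _ => hf0 _
  have hgsum : Summable g := summable_pi_prod r f hf0 summable_one_int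
  set Sg : ℝ := ∑' x, g x with hSgdef
  have hSg0 : 0 ≤ Sg := tsum_nonneg hg0
  refine ⟨(C0 + 1) * 4 ^ r * (Sg + 1), by positivity, ?_⟩
  intro X hX q hq hqX Ψ hΨ _hper
  have hX0 : (0:ℝ) < X := by linarith
  have hX1 : (1:ℝ) ≤ X := by linarith
  have hq0 : (0:ℝ) < q := by exact_mod_cast hq
  set K : ℝ := C0 * 4 ^ r * (X ^ ((2*r : ℕ):ℝ) * (X ^ (η * N))⁻¹) with hKdef
  have hK0 : 0 ≤ K := by positivity
  set T : (Fin r → ℤ) → ℂ := fun x =>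
    if ∃ i, (q : ℝ) * X ^ (-(1 / d) + η) < |(x i : ℝ)| then
      fourierZ r q Ψ x *
        FourierTransform.fourier (⇑φ : EuclideanSpace ℝ (Fin r) → ℂ)
          ((WithLp.toLp 2 (fun i => (x i : ℝ) * X ^ (1 / d) / q) : EuclideanSpace ℝ (Fin r)))
    else 0 with hTdef
  have hbound : ∀ x, ‖T x‖ ≤ K * g x := by
    intro x
    rw [hTdef]
    by_cases hcond : ∃ i, (q : ℝ) * X ^ (-(1 / d) + η) < |(x i : ℝ)|
    · simp only [if_pos hcond]
      obtain ⟨i0, hi0⟩ := hcond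
      set ξ : EuclideanSpace ℝ (Fin r) :=
        (WithLp.toLp 2 (fun i => (x i : ℝ) * X ^ (1/d) / q) : EuclideanSpace ℝ (Fin r)) with hξdef
      have hXd1 : (1:ℝ) ≤ X ^ (1/d) :=
        Real.one_le_rpow hX1 (by positivity)
      have hξi : ∀ i, |ξ i| = |(x i : ℝ)| * X ^ (1/d) / q := by
        intro i
        show |(x i : ℝ) * X ^ (1/d) / q| = _
        rw [abs_div, abs_mul, abs_of_pos (lt_of_lt_of_le one_pos hXd1),
          abs_of_pos hq0]
      have hξi_lb : ∀ i, |(x i : ℝ)| / X ≤ |ξ i| := by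
        intro i
        rw [hξi]
        rw [div_le_div_iff₀ hX0 hq0]
        calc |(x i : ℝ)| * (q:ℝ) ≤ |(x i : ℝ)| * X := by
              exact mul_le_mul_of_nonneg_left hqX.le (abs_nonneg _)
          _ ≤ |(x i : ℝ)| * X ^ (1/d) * X := by
              have h := mul_le_mul_of_nonneg_right
                (mul_le_mul_of_nonneg_left hXd1 (abs_nonneg ((x i : ℝ)))) hX0.le
              rw [mul_one] at h
              exact h
      -- the norm of ξ is at least X^η
      have hnormξ : X ^ η ≤ ‖ξ‖ := by
        refine le_trans ?_ (coord_abs_le_norm ξ i0)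
        rw [hξi]
        rw [le_div_iff₀ hq0]
        have hmul : X ^ (-(1/d) + η) * X ^ (1/d) = X ^ η := by
          rw [← Real.rpow_add hX0]
          congr 1
          ring
        calc X ^ η * (q:ℝ) = (q:ℝ) * X ^ (-(1/d) + η) * X ^ (1/d) := by
              rw [mul_assoc, hmul]
              ring
          _ ≤ |(x i0 : ℝ)| * X ^ (1/d) := by
              exact mul_le_mul_of_nonneg_right hi0.le (by positivity)
      have hXη1 : (1:ℝ) ≤ X ^ η := Real.one_le_rpow hX1 hη.le
      have hnorm1 : (1:ℝ) ≤ ‖ξ‖ := le_trans hXη1 hnormξ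
      have hnorm0 : (0:ℝ) < ‖ξ‖ := lt_of_lt_of_le one_pos hnorm1
      -- Schwartz decay
      have hdecay : ‖FourierTransform.fourier (⇑φ : EuclideanSpace ℝ (Fin r) → ℂ) ξ‖ ≤ C0 / ‖ξ‖ ^ (N + 2*r) := by
        have h := hC0 ξ
        rw [norm_iteratedFDeriv_zero] at h
        rw [le_div_iff₀ (by positivity)]
        rw [SchwartzMap.fourierTransformCLM_apply, SchwartzMap.fourier_coe] at h
        linarith [h]
      -- bound ‖ξ‖^N from below
      have hpowN : X ^ (η * N) ≤ ‖ξ‖ ^ N := by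
        calc X ^ (η * N) = (X ^ η) ^ N := by
              rw [← Real.rpow_natCast (X ^ η) N, ← Real.rpow_mul hX0.le]
          _ ≤ ‖ξ‖ ^ N := pow_le_pow_left₀ (by positivity) hnormξ N
      -- bound ‖ξ‖^(2r) from below by the product
      have hpow2r : (∏ i, (1 + |(x i : ℝ)|) ^ 2) ≤ 4 ^ r * X ^ ((2*r:ℕ):ℝ) * ‖ξ‖ ^ (2*r) := by
        have hterm : ∀ i, (1 + |(x i : ℝ)|) ^ 2 ≤ 4 * X ^ 2 * ‖ξ‖ ^ 2 := by
          intro i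
          have h1 : 1 + |(x i : ℝ)| ≤ X * (1 + |ξ i|) := by
            have := hξi_lb i
            have h2 : |(x i : ℝ)| ≤ X * |ξ i| := by
              rw [div_le_iff₀ hX0] at this
              linarith [this]
            nlinarith
          have h2 : 1 + |ξ i| ≤ 2 * ‖ξ‖ := by
            have := coord_abs_le_norm ξ i
            linarith
          calc (1 + |(x i : ℝ)|) ^ 2 ≤ (X * (2 * ‖ξ‖)) ^ 2 := by
                apply pow_le_pow_left₀ (by positivity)
                calc 1 + |(x i : ℝ)| ≤ X * (1 + |ξ i|) := h1
                  _ ≤ X * (2 * ‖ξ‖) := by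
                      exact mul_le_mul_of_nonneg_left h2 hX0.le
            _ = 4 * X ^ 2 * ‖ξ‖ ^ 2 := by ring
        calc (∏ i, (1 + |(x i : ℝ)|) ^ 2) ≤ ∏ _i : Fin r, (4 * X ^ 2 * ‖ξ‖ ^ 2) := by
              exact Finset.prod_le_prod (fun i _ => by positivity) (fun i _ => hterm i)
          _ = 4 ^ r * X ^ ((2*r:ℕ):ℝ) * ‖ξ‖ ^ (2*r) := by
              rw [Finset.prod_const, Finset.card_univ, Fintype.card_fin]
              rw [Real.rpow_natCast]
              ring
      -- combine
      have habsF : ‖fourierZ r q Ψ x‖ ≤ 1 := abs_fourierZ_le_one hq Ψ hΨ x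
      rw [norm_mul]
      have hgx : g x = (∏ i, (1 + |(x i : ℝ)|) ^ 2)⁻¹ := by
        rw [hgdef, ← Finset.prod_inv_distrib]
      have key : ‖FourierTransform.fourier (⇑φ : EuclideanSpace ℝ (Fin r) → ℂ) ξ‖ ≤ K * g x := by
        have hP0 : (0:ℝ) < ∏ i, (1 + |(x i : ℝ)|) ^ 2 :=
          Finset.prod_pos fun i _ => by positivity
        calc ‖FourierTransform.fourier (⇑φ : EuclideanSpace ℝ (Fin r) → ℂ) ξ‖ ≤ C0 / ‖ξ‖ ^ (N + 2*r) := hdecay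
          _ = C0 * (‖ξ‖ ^ N)⁻¹ * (‖ξ‖ ^ (2*r))⁻¹ := by
              rw [pow_add]
              field_simp
          _ ≤ C0 * (X ^ (η * N))⁻¹ * (4 ^ r * X ^ ((2*r:ℕ):ℝ) * (∏ i, (1 + |(x i : ℝ)|) ^ 2)⁻¹) := by
              have h1 : (‖ξ‖ ^ N)⁻¹ ≤ (X ^ (η * N))⁻¹ :=
                inv_anti₀ (by positivity) hpowN
              have h2 : (‖ξ‖ ^ (2*r))⁻¹ ≤ 4 ^ r * X ^ ((2*r:ℕ):ℝ) * (∏ i, (1 + |(x i : ℝ)|) ^ 2)⁻¹ := by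
                rw [← div_eq_mul_inv, ← one_div, div_le_div_iff₀ (by positivity) hP0]
                calc 1 * (∏ i, (1 + |(x i : ℝ)|) ^ 2) = ∏ i, (1 + |(x i : ℝ)|) ^ 2 := by ring
                  _ ≤ 4 ^ r * X ^ ((2*r:ℕ):ℝ) * ‖ξ‖ ^ (2*r) := hpow2r
                  _ = (4 ^ r * X ^ ((2*r:ℕ):ℝ)) * ‖ξ‖ ^ (2*r) := by ring
              calc C0 * (‖ξ‖ ^ N)⁻¹ * (‖ξ‖ ^ (2*r))⁻¹
                  ≤ C0 * (X ^ (η * N))⁻¹ * (‖ξ‖ ^ (2*r))⁻¹ := by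
                    apply mul_le_mul_of_nonneg_right _ (by positivity)
                    exact mul_le_mul_of_nonneg_left h1 hC0pos.le
                _ ≤ C0 * (X ^ (η * N))⁻¹ * (4 ^ r * X ^ ((2*r:ℕ):ℝ) * (∏ i, (1 + |(x i : ℝ)|) ^ 2)⁻¹) := by
                    exact mul_le_mul_of_nonneg_left h2 (by positivity)
          _ = K * g x := by
              rw [hgx, hKdef]
              ring
      calc ‖fourierZ r q Ψ x‖ * ‖FourierTransform.fourier (⇑φ : EuclideanSpace ℝ (Fin r) → ℂ) ξ‖
          ≤ 1 * (K * g x) := by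
            apply mul_le_mul habsF _ (norm_nonneg _) zero_le_one
            exact key
        _ = K * g x := one_mul _
    · simp only [if_neg hcond, norm_zero]
      positivity
  -- summability of the terms
  have hmajor : Summable (fun x => K * g x) := hgsum.mul_left K
  have hTsummable : Summable (fun x => ‖T x‖) :=
    Summable.of_nonneg_of_le (fun x => norm_nonneg _)
      (fun x => hbound x) hmajor
  have htsum_le : ∑' x, ‖T x‖ ≤ K * Sg := by
    calc ∑' x, ‖T x‖ ≤ ∑' x, K * g x := by
          refine Summable.tsum_le_tsum ?_ hTsummable hmajor
          intro x
          exact hbound x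
      _ = K * Sg := by rw [tsum_mul_left]
  -- put it together
  rw [norm_mul, Complex.norm_real, Real.norm_of_nonneg (by positivity : (0:ℝ) ≤ X ^ ((r:ℝ)/d))]
  have h1 : ‖∑' x, T x‖ ≤ K * Sg := by
    refine le_trans ?_ htsum_le
    simpa using norm_tsum_le_tsum_norm hTsummable
  have hXpow : X ^ ((r:ℝ)/d) * (X ^ ((2*r:ℕ):ℝ) * (X ^ (η * N))⁻¹) ≤ X ^ (-B) := by
    rw [← Real.rpow_neg hX0.le, ← Real.rpow_add hX0, ← Real.rpow_add hX0]
    apply Real.rpow_le_rpow_of_exponent_le hX1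
    push_cast
    linarith
  calc X ^ ((r:ℝ)/d) * ‖∑' x, T x‖
      ≤ X ^ ((r:ℝ)/d) * (K * Sg) := by
        exact mul_le_mul_of_nonneg_left h1 (by positivity)
    _ = (C0 * 4 ^ r * Sg) * (X ^ ((r:ℝ)/d) * (X ^ ((2*r:ℕ):ℝ) * (X ^ (η * N))⁻¹)) := by
        rw [hKdef]; ring
    _ ≤ (C0 * 4 ^ r * Sg) * X ^ (-B) := by
        exact mul_le_mul_of_nonneg_left hXpow (by positivity)
    _ ≤ (C0 + 1) * 4 ^ r * (Sg + 1) * X ^ (-B) := by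
        apply mul_le_mul_of_nonneg_right _ (by positivity)
        have h4 : (0:ℝ) ≤ 4 ^ r * (C0 + Sg + 1) := by positivity
        nlinarith [h4]
end

section
/- For every real Y ≥ 1, the number of quadruples (a,b,c,d) ∈ ℤ⁴ with |a| ≤ Y, |b| ≤ Y, |c| ≤ Y, |d| ≤ Y and b²c² − 4ac³ − 4b³d − 27a²d² + 18abcd = 0 is at most C·Y² for an absolute constant C. -/
lemma root2fact (a b c d p q : ℤ) (hq : q ≠ 0) (hco : IsCoprime p q)
    (h1 : a*p^3 + b*p^2*q + c*p*q^2 + d*q^3 = 0)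
    (h2 : 3*a*p^2 + 2*b*p*q + c*q^2 = 0) :
    ∃ e g : ℤ, a = q^2*e ∧ b = q^2*g - 2*p*q*e ∧ c = p^2*e - 2*p*q*g ∧ d = p^2*g := by
  have hqp : IsCoprime q p := hco.symm
  have hqa : q ∣ a := by
    refine (hqp.pow_right (n := 3)).dvd_of_dvd_mul_right ⟨-(b*p^2 + c*p*q + d*q^2), ?_⟩
    linear_combination h1
  obtain ⟨a₁, ha₁⟩ := hqa
  have eq1' : a₁*p^3 + b*p^2 + c*p*q + d*q^2 = 0 := by
    have : q * (a₁*p^3 + b*p^2 + c*p*q + d*q^2) = q * 0 := by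
      linear_combination h1 - p^3 * ha₁
    exact mul_left_cancel₀ hq this
  have eq2' : 3*a₁*p^2 + 2*b*p + c*q = 0 := by
    have : q * (3*a₁*p^2 + 2*b*p + c*q) = q * 0 := by
      linear_combination h2 - 3*p^2 * ha₁
    exact mul_left_cancel₀ hq this
  have hd1 : q ∣ a₁*p + b := by
    refine (hqp.pow_right (n := 2)).dvd_of_dvd_mul_right ⟨-(c*p + d*q), ?_⟩
    linear_combination eq1'
  have hd2 : q ∣ 3*a₁*p + 2*b := by
    refine (hqp.pow_right (n := 1)).dvd_of_dvd_mul_right ⟨-c, ?_⟩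
    linear_combination eq2'
  have hd3 : q ∣ a₁ * p := by
    have h := dvd_sub hd2 (Dvd.dvd.mul_left hd1 2)
    have heq : 3*a₁*p + 2*b - 2*(a₁*p + b) = a₁ * p := by ring
    rwa [heq] at h
  have hqa₁ : q ∣ a₁ := hqp.dvd_of_dvd_mul_right hd3
  obtain ⟨e, he⟩ := hqa₁
  have hqb : q ∣ b := by
    have : b = (a₁*p + b) - q*e*p := by rw [← he]; ring
    rw [this]
    exact dvd_sub hd1 ⟨e*p, by ring⟩
  obtain ⟨b₁, hb₁⟩ := hqb
  have hc : c = -3*e*p^2 - 2*b₁*p := by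
    have : q * c = q * (-3*e*p^2 - 2*b₁*p) := by
      linear_combination eq2' - 3*p^2*he - (2*p)*hb₁ - (3*p^2)*(congrArg (· * 0) rfl : (q:ℤ)*0 = q*0)
    exact mul_left_cancel₀ hq this
  have hdq : d * q = p^2 * (2*e*p + b₁) := by
    have : q * (d * q) = q * (p^2 * (2*e*p + b₁)) := by
      linear_combination eq1' - p^3 * he - p^2 * hb₁ - p*q*hc + (0:ℤ)
    exact mul_left_cancel₀ hq this
  have hd4 : q ∣ 2*e*p + b₁ := by
    refine (hqp.pow_right (n := 2)).dvd_of_dvd_mul_right ⟨d, ?_⟩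
    linear_combination -hdq
  obtain ⟨g, hg⟩ := hd4
  refine ⟨e, g, ?_, ?_, ?_, ?_⟩
  · rw [ha₁, he]; ring
  · rw [hb₁]
    have hb2 : b₁ = q * g - 2*e*p := by linear_combination hg
    rw [hb2]; ring
  · rw [hc]
    have : b₁ = q * g - 2*e*p := by linear_combination hg
    rw [this]; ring
  · have : d * q = (p^2 * g) * q := by rw [hdq, hg]; ring
    exact mul_right_cancel₀ hq this


lemma exists_root (a b c d : ℤ)
    (h : b^2*c^2 - 4*a*c^3 - 4*b^3*d - 27*a^2*d^2 + 18*a*b*c*d = 0) (ha : a ≠ 0) :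
    ∃ N D : ℤ, D ≠ 0 ∧ a*N^3 + b*N^2*D + c*N*D^2 + d*D^3 = 0 ∧
      3*a*N^2 + 2*b*N*D + c*D^2 = 0 := by
  by_cases hΔ : b^2 - 3*a*c = 0
  · have key : 27*a^2*d - b^3 = 0 := by
      have hsq : (27*a^2*d - b^3)^2 = 0 := by
        linear_combination (-27*a^2) * h + (-162*a^2*b*d + 36*a^2*c^2 + 3*a*b^2*c + b^4) * hΔ
      exact pow_eq_zero_iff (two_ne_zero) |>.mp hsq
    refine ⟨-b, 3*a, by simpa using ha, ?_, ?_⟩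
    · linear_combination a * key + 3*a*b * hΔ
    · linear_combination (-3*a) * hΔ
  · refine ⟨9*a*d - b*c, 2*(b^2 - 3*a*c), by simpa using hΔ, ?_, ?_⟩
    · linear_combination (-27*a^2*d + 9*a*b*c - 2*b^3) * h
    · linear_combination (-9*a) * h

lemma root_reduce (a b c d N D : ℤ) (hD : D ≠ 0)
    (h1 : a*N^3 + b*N^2*D + c*N*D^2 + d*D^3 = 0)
    (h2 : 3*a*N^2 + 2*b*N*D + c*D^2 = 0) :
    ∃ p q : ℤ, q ≠ 0 ∧ IsCoprime p q ∧
      a*p^3 + b*p^2*q + c*p*q^2 + d*q^3 = 0 ∧ 3*a*p^2 + 2*b*p*q + c*q^2 = 0 := by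
  set G : ℤ := (Int.gcd N D : ℤ) with hGdef
  have hGpos : 0 < Int.gcd N D := Int.gcd_pos_of_ne_zero_right N hD
  have hG0 : G ≠ 0 := by
    simp only [hGdef, ne_eq, Int.natCast_eq_zero]
    omega
  obtain ⟨p, hp⟩ : G ∣ N := Int.gcd_dvd_left N D
  obtain ⟨q, hq⟩ : G ∣ D := Int.gcd_dvd_right N D
  have hq0 : q ≠ 0 := by
    rintro rfl
    simp at hq
    exact hD (by omega)
  have hcop : IsCoprime p q := by
    rw [Int.isCoprime_iff_gcd_eq_one]
    have := Int.gcd_div_gcd_div_gcd (i := N) (j := D) hGpos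
    have hpe : N / G = p := by rw [hp]; exact Int.mul_ediv_cancel_left p hG0
    have hqe : D / G = q := by rw [hq]; exact Int.mul_ediv_cancel_left q hG0
    rwa [hpe, hqe] at this
  refine ⟨p, q, hq0, hcop, ?_, ?_⟩
  · have hcube : G^3 * (a*p^3 + b*p^2*q + c*p*q^2 + d*q^3) = 0 := by
      rw [hp, hq] at h1; linear_combination h1
    rcases mul_eq_zero.mp hcube with h | h
    · exact absurd (pow_eq_zero_iff (three_ne_zero) |>.mp h) hG0
    · exact h
  · have hsq : G^2 * (3*a*p^2 + 2*b*p*q + c*q^2) = 0 := by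
      rw [hp, hq] at h2; linear_combination h2
    rcases mul_eq_zero.mp hsq with h | h
    · exact absurd (pow_eq_zero_iff (two_ne_zero) |>.mp h) hG0
    · exact h


lemma fact_main (a b c d : ℤ)
    (h : b^2*c^2 - 4*a*c^3 - 4*b^3*d - 27*a^2*d^2 + 18*a*b*c*d = 0) (ha : a ≠ 0) :
    ∃ p q e g : ℤ, a = q^2*e ∧ b = q^2*g - 2*p*q*e ∧ c = p^2*e - 2*p*q*g ∧ d = p^2*g := by
  obtain ⟨N, D, hD, h1, h2⟩ := exists_root a b c d h ha
  obtain ⟨p, q, hq, hco, h1', h2'⟩ := root_reduce a b c d N D hD h1 h2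
  obtain ⟨e, g, he⟩ := root2fact a b c d p q hq hco h1' h2'
  exact ⟨p, q, e, g, he⟩

lemma fact (a b c d : ℤ)
    (h : b^2*c^2 - 4*a*c^3 - 4*b^3*d - 27*a^2*d^2 + 18*a*b*c*d = 0) :
    ∃ p q e g : ℤ, a = q^2*e ∧ b = q^2*g - 2*p*q*e ∧ c = p^2*e - 2*p*q*g ∧ d = p^2*g := by
  by_cases ha : a ≠ 0
  · exact fact_main a b c d h ha
  push_neg at ha
  subst ha
  by_cases hd : d ≠ 0
  · -- reversal symmetry
    have h' : c^2*b^2 - 4*d*b^3 - 4*c^3*(0:ℤ) - 27*d^2*(0:ℤ)^2 + 18*d*c*b*0 = 0 := by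
      linear_combination h
    obtain ⟨p, q, e, g, h1, h2, h3, h4⟩ := fact_main d c b 0 (by linear_combination h) hd
    exact ⟨q, p, g, e, by linarith [h4], by linarith [h3], by linarith [h2], by linarith [h1]⟩
  push_neg at hd
  subst hd
  have hbc : b = 0 ∨ c = 0 := by
    have : (b*c)^2 = 0 := by linear_combination h
    rcases mul_eq_zero.mp (pow_eq_zero_iff two_ne_zero |>.mp this) with h' | h'
    · exact Or.inl h'
    · exact Or.inr h'
  rcases hbc with rfl | rfl
  · exact ⟨1, 0, c, 0, by ring, by ring, by ring, by ring⟩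
  · exact ⟨0, 1, 0, b, by ring, by ring, by ring, by ring⟩


lemma uniq_bad (p q k₁ k₂ : ℤ) (h10 : 0 ≤ k₁) (h14 : k₁ ≤ 4) (h20 : 0 ≤ k₂) (h24 : k₂ ≤ 4)
    (hne : k₁ ≠ k₂) (hb1 : 10*|q*k₁ - p| < max |p| |q|) (hb2 : 10*|q*k₂ - p| < max |p| |q|) :
    False := by
  set m : ℤ := max |p| |q| with hm
  have hm0 : 0 ≤ m := le_trans (abs_nonneg p) (le_max_left _ _)
  have hdiff : |q*k₁ - q*k₂| ≤ |q*k₁ - p| + |q*k₂ - p| := by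
    calc |q*k₁ - q*k₂| ≤ |q*k₁ - p| + |p - q*k₂| := abs_sub_le _ _ _
    _ = |q*k₁ - p| + |q*k₂ - p| := by rw [abs_sub_comm p]
  have habsq : |q| ≤ |q*k₁ - q*k₂| := by
    have : |q*k₁ - q*k₂| = |q| * |k₁ - k₂| := by rw [← abs_mul]; ring_nf
    rw [this]
    have h1 : 1 ≤ |k₁ - k₂| := by
      rcases abs_cases (k₁ - k₂) with ⟨h, _⟩ | ⟨h, _⟩ <;> omega
    nlinarith [abs_nonneg q]
  have hq5 : 10 * |q| < 2 * m := by omega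
  have hpm : m ≤ |p| := by
    rcases max_cases |p| |q| with ⟨h, _⟩ | ⟨h, _⟩ <;> omega
  have hk1 : |q * k₁| ≤ 4 * |q| := by
    rw [abs_mul]
    have : |k₁| ≤ 4 := by rcases abs_cases k₁ with ⟨h, _⟩ | ⟨h, _⟩ <;> omega
    nlinarith [abs_nonneg q]
  have hp1 : |p| ≤ |q*k₁ - p| + |q*k₁| := by
    calc |p| = |q*k₁ - (q*k₁ - p)| := by ring_nf
    _ ≤ |q*k₁| + |q*k₁ - p| := abs_sub _ _
    _ = |q*k₁ - p| + |q*k₁| := by ring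
  omega

lemma good_k (p q e g : ℤ) :
    ∃ k : ℤ, 0 ≤ k ∧ k ≤ 4 ∧ max |p| |q| ≤ 10 * |q*k - p| ∧ max |e| |g| ≤ 10 * |e*k + g| := by
  have key : ∀ u v k₁ k₂ : ℤ, 0 ≤ k₁ → k₁ ≤ 4 → 0 ≤ k₂ → k₂ ≤ 4 → k₁ ≠ k₂ →
      ¬(max |u| |v| ≤ 10 * |v*k₁ - u|) → ¬(max |u| |v| ≤ 10 * |v*k₂ - u|) → False := by
    intro u v k₁ k₂ a1 a2 a3 a4 a5 a6 a7
    exact uniq_bad u v k₁ k₂ a1 a2 a3 a4 a5 (by omega) (by omega)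
  have hQ : ∀ k : ℤ, (max |e| |g| ≤ 10 * |e*k + g|) ↔ (max |(-g)| |e| ≤ 10 * |e*k - (-g)|) := by
    intro k
    rw [abs_neg, max_comm, show e*k - (-g) = e*k + g by ring]
  by_cases hP0 : max |p| |q| ≤ 10 * |q*0 - p|
  · by_cases hQ0 : max |e| |g| ≤ 10 * |e*0 + g|
    · exact ⟨0, by norm_num, by norm_num, hP0, hQ0⟩
    · -- Q1 and Q2 hold
      have hQ1 : max |e| |g| ≤ 10 * |e*1 + g| := by
        by_contra hq1
        exact key (-g) e 0 1 (by norm_num) (by norm_num) (by norm_num) (by norm_num) (by norm_num)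
          (by rw [← hQ 0]; exact hQ0) (by rw [← hQ 1]; exact hq1)
      by_cases hP1 : max |p| |q| ≤ 10 * |q*1 - p|
      · exact ⟨1, by norm_num, by norm_num, hP1, hQ1⟩
      · have hP2 : max |p| |q| ≤ 10 * |q*2 - p| := by
          by_contra hp2
          exact key p q 1 2 (by norm_num) (by norm_num) (by norm_num) (by norm_num) (by norm_num) hP1 hp2
        have hQ2 : max |e| |g| ≤ 10 * |e*2 + g| := by
          by_contra hq2
          exact key (-g) e 0 2 (by norm_num) (by norm_num) (by norm_num) (by norm_num) (by norm_num)
            (by rw [← hQ 0]; exact hQ0) (by rw [← hQ 2]; exact hq2)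
        exact ⟨2, by norm_num, by norm_num, hP2, hQ2⟩
  · -- P1 and P2 hold
    have hP1 : max |p| |q| ≤ 10 * |q*1 - p| := by
      by_contra hp1
      exact key p q 0 1 (by norm_num) (by norm_num) (by norm_num) (by norm_num) (by norm_num) hP0 hp1
    have hP2 : max |p| |q| ≤ 10 * |q*2 - p| := by
      by_contra hp2
      exact key p q 0 2 (by norm_num) (by norm_num) (by norm_num) (by norm_num) (by norm_num) hP0 hp2
    by_cases hQ1 : max |e| |g| ≤ 10 * |e*1 + g|
    · exact ⟨1, by norm_num, by norm_num, hP1, hQ1⟩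
    · have hQ2 : max |e| |g| ≤ 10 * |e*2 + g| := by
        by_contra hq2
        exact key (-g) e 1 2 (by norm_num) (by norm_num) (by norm_num) (by norm_num) (by norm_num)
          (by rw [← hQ 1]; exact hQ1) (by rw [← hQ 2]; exact hq2)
      exact ⟨2, by norm_num, by norm_num, hP2, hQ2⟩


lemma height (p q e g : ℤ) (Y : ℝ)
    (h1 : (|q^2*e| : ℤ) ≤ Y) (h2 : (|q^2*g - 2*p*q*e| : ℤ) ≤ Y)
    (h3 : (|p^2*e - 2*p*q*g| : ℤ) ≤ Y) (h4 : (|p^2*g| : ℤ) ≤ Y) :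
    (((max |p| |q|)^2 * max |e| |g| : ℤ) : ℝ) ≤ 85000 * Y := by
  obtain ⟨k, hk0, hk4, hm, hn⟩ := good_k p q e g
  set m : ℤ := max |p| |q| with hmdef
  set n : ℤ := max |e| |g| with hndef
  have hm0 : 0 ≤ m := le_trans (abs_nonneg p) (le_max_left _ _)
  have hn0 : 0 ≤ n := le_trans (abs_nonneg e) (le_max_left _ _)
  have key : m^2 * n ≤ 1000 * ((q*k-p)^2 * |e*k+g|) := by
    have hsq : m^2 ≤ (10*|q*k-p|)^2 := pow_le_pow_left₀ hm0 hm 2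
    have habs2 : (10*|q*k-p|)^2 = 100 * (q*k-p)^2 := by
      rw [mul_pow, sq_abs]; norm_num
    rw [habs2] at hsq
    calc m^2 * n ≤ (100*(q*k-p)^2) * (10*|e*k+g|) :=
          mul_le_mul hsq hn hn0 (by positivity)
      _ = 1000 * ((q*k-p)^2 * |e*k+g|) := by ring
  have hvab : ((q*k-p)^2 * |e*k+g| : ℤ) = |(q^2*e)*k^3 + (q^2*g - 2*p*q*e)*k^2
      + (p^2*e - 2*p*q*g)*k + p^2*g| := by
    rw [show (q^2*e)*k^3 + (q^2*g - 2*p*q*e)*k^2 + (p^2*e - 2*p*q*g)*k + p^2*g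
        = (q*k-p)^2 * (e*k+g) by ring, abs_mul, abs_pow, sq_abs]
  have hkabs : |k| ≤ 4 := by rcases abs_cases k with ⟨h, _⟩ | ⟨h, _⟩ <;> omega
  have hY0 : (0:ℝ) ≤ Y := le_trans (by positivity) h4
  have hvbound : ((|(q^2*e)*k^3 + (q^2*g - 2*p*q*e)*k^2 + (p^2*e - 2*p*q*g)*k + p^2*g| : ℤ) : ℝ)
      ≤ 85 * Y := by
    have e1 : (|(q^2*e)*k^3| : ℤ) = |q^2*e| * |k|^3 := by rw [abs_mul, abs_pow]
    have e2 : (|(q^2*g - 2*p*q*e)*k^2| : ℤ) = |q^2*g - 2*p*q*e| * |k|^2 := by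
      rw [abs_mul, abs_pow]
    have e3 : (|(p^2*e - 2*p*q*g)*k| : ℤ) = |p^2*e - 2*p*q*g| * |k| := by rw [abs_mul]
    have tri : (|(q^2*e)*k^3 + (q^2*g - 2*p*q*e)*k^2 + (p^2*e - 2*p*q*g)*k + p^2*g| : ℤ)
        ≤ |q^2*e| * |k|^3 + |q^2*g - 2*p*q*e| * |k|^2 + |p^2*e - 2*p*q*g| * |k| + |p^2*g| := by
      rw [← e1, ← e2, ← e3]
      calc _ ≤ |(q^2*e)*k^3 + (q^2*g - 2*p*q*e)*k^2 + (p^2*e - 2*p*q*g)*k| + |p^2*g| :=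
            abs_add_le _ _
        _ ≤ |(q^2*e)*k^3 + (q^2*g - 2*p*q*e)*k^2| + |(p^2*e - 2*p*q*g)*k| + |p^2*g| := by
            have := abs_add_le ((q^2*e)*k^3 + (q^2*g - 2*p*q*e)*k^2) ((p^2*e - 2*p*q*g)*k)
            linarith
        _ ≤ |(q^2*e)*k^3| + |(q^2*g - 2*p*q*e)*k^2| + |(p^2*e - 2*p*q*g)*k| + |p^2*g| := by
            have := abs_add_le ((q^2*e)*k^3) ((q^2*g - 2*p*q*e)*k^2)
            linarith
    have habs0 : (0:ℤ) ≤ |k| := abs_nonneg k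
    have hk3 : |k|^3 ≤ 64 := by nlinarith
    have hk2 : |k|^2 ≤ 16 := by nlinarith
    calc ((|(q^2*e)*k^3 + (q^2*g - 2*p*q*e)*k^2 + (p^2*e - 2*p*q*g)*k + p^2*g| : ℤ) : ℝ)
        ≤ ((|q^2*e| * |k|^3 + |q^2*g - 2*p*q*e| * |k|^2 + |p^2*e - 2*p*q*g| * |k| + |p^2*g| : ℤ) : ℝ) := by
          exact_mod_cast tri
      _ ≤ Y * 64 + Y * 16 + Y * 4 + Y := by
          push_cast
          have c1 : ((|q^2*e| : ℤ) : ℝ) * ((|k|^3 : ℤ) : ℝ) ≤ Y * 64 := by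
            apply mul_le_mul h1 (by exact_mod_cast hk3) (by positivity) hY0
          have c2 : ((|q^2*g - 2*p*q*e| : ℤ) : ℝ) * ((|k|^2 : ℤ) : ℝ) ≤ Y * 16 := by
            apply mul_le_mul h2 (by exact_mod_cast hk2) (by positivity) hY0
          have c3 : ((|p^2*e - 2*p*q*g| : ℤ) : ℝ) * ((|k| : ℤ) : ℝ) ≤ Y * 4 := by
            apply mul_le_mul h3 (by exact_mod_cast hkabs) (by positivity) hY0
          have h4' := h4
          push_cast at c1 c2 c3 h4'
          linarith
      _ = 85 * Y := by ring
  calc ((m^2 * n : ℤ) : ℝ) ≤ ((1000 * ((q*k-p)^2 * |e*k+g|) : ℤ) : ℝ) := by exact_mod_cast key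
    _ = 1000 * ((|(q^2*e)*k^3 + (q^2*g - 2*p*q*e)*k^2 + (p^2*e - 2*p*q*g)*k + p^2*g| : ℤ) : ℝ) := by
        rw [hvab]; push_cast; ring
    _ ≤ 1000 * (85 * Y) := by linarith
    _ = 85000 * Y := by ring


lemma sum_inv_sq (M : ℕ) : ∑ m ∈ Finset.Icc 1 M, (1:ℝ)/(m:ℝ)^2 ≤ 2 - 2/((M:ℝ)+1) := by
  induction M with
  | zero => simp
  | succ M ih =>
    rw [Finset.sum_Icc_succ_top (by omega : 1 ≤ M + 1)]
    have h1 : (0:ℝ) < (M:ℝ)+1 := by positivity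
    have h2 : (0:ℝ) < (M:ℝ)+2 := by positivity
    have key : (1:ℝ)/((M:ℝ)+1)^2 ≤ 2/((M:ℝ)+1) - 2/((M:ℝ)+2) := by
      rw [div_sub_div _ _ (ne_of_gt h1) (ne_of_gt h2), div_le_div_iff₀ (by positivity) (by positivity)]
      nlinarith
    push_cast
    have : ((M:ℝ)+1+1) = (M:ℝ)+2 := by ring
    rw [this]
    linarith

noncomputable section
open Classical

def T0 (W : ℤ) : Finset (ℤ × ℤ × ℤ × ℤ) :=
  ((Finset.Icc (-W) W ×ˢ Finset.Icc (-W) W ×ˢ Finset.Icc (-W) W ×ˢ Finset.Icc (-W) W)).filter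
    (fun x => 1 ≤ max |x.1| |x.2.1| ∧ 1 ≤ max |x.2.2.1| |x.2.2.2| ∧
      (max |x.1| |x.2.1|)^2 * max |x.2.2.1| |x.2.2.2| ≤ W)

lemma fiber_bound (W : ℤ) (m : ℕ) (hm : 1 ≤ m) :
    (((T0 W).filter (fun x => (max |x.1| |x.2.1|).toNat = m)).card : ℤ)
      ≤ 72 * m * (W / (m:ℤ)^2)^2 := by
  set t : ℤ := W / (m:ℤ)^2 with htdef
  have hmpos : (0:ℤ) < (m:ℤ)^2 := by positivity
  -- members have n ≤ t
  have hmem : ∀ x ∈ (T0 W).filter (fun x => (max |x.1| |x.2.1|).toNat = m),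
      max |x.1| |x.2.1| = (m:ℤ) ∧ 1 ≤ max |x.2.2.1| |x.2.2.2| ∧
        max |x.2.2.1| |x.2.2.2| ≤ t := by
    intro x hx
    rw [Finset.mem_filter] at hx
    obtain ⟨hx1, hx2⟩ := hx
    rw [T0, Finset.mem_filter] at hx1
    obtain ⟨-, hmx, hnx, hW⟩ := hx1
    have hmx' : max |x.1| |x.2.1| = (m:ℤ) := by omega
    refine ⟨hmx', hnx, ?_⟩
    rw [htdef]
    rw [Int.le_ediv_iff_mul_le hmpos]
    calc max |x.2.2.1| |x.2.2.2| * (m:ℤ)^2 = (max |x.1| |x.2.1|)^2 * max |x.2.2.1| |x.2.2.2| := by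
          rw [hmx']; ring
      _ ≤ W := hW
  by_cases ht : t ≤ 0
  · have : ((T0 W).filter (fun x => (max |x.1| |x.2.1|).toNat = m)) = ∅ := by
      rw [Finset.filter_eq_empty_iff]
      intro x hx
      intro hfx
      have := hmem x (Finset.mem_filter.mpr ⟨hx, hfx⟩)
      omega
    rw [this]
    have hpos : (0:ℤ) ≤ 72 * m * t^2 := by positivity
    simpa using hpos
  push_neg at ht
  -- inject into A ×ˢ B
  set A : Finset (ℤ × ℤ) := (Finset.Icc (-(m:ℤ)) m ×ˢ Finset.Icc (-(m:ℤ)) m) \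
    (Finset.Icc (-(m:ℤ)+1) ((m:ℤ)-1) ×ˢ Finset.Icc (-(m:ℤ)+1) ((m:ℤ)-1)) with hAdef
  set B : Finset (ℤ × ℤ) := Finset.Icc (-t) t ×ˢ Finset.Icc (-t) t with hBdef
  have hcardle : ((T0 W).filter (fun x => (max |x.1| |x.2.1|).toNat = m)).card
      ≤ (A ×ˢ B).card := by
    apply Finset.card_le_card_of_injOn (fun x => ((x.1, x.2.1), (x.2.2.1, x.2.2.2)))
    · intro x hx
      obtain ⟨hmx, hnx, hnt⟩ := hmem x hx
      have h1 : |x.1| ≤ (m:ℤ) := hmx ▸ le_max_left _ _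
      have h2 : |x.2.1| ≤ (m:ℤ) := hmx ▸ le_max_right _ _
      have h3 : |x.2.2.1| ≤ t := le_trans (le_max_left _ _) hnt
      have h4 : |x.2.2.2| ≤ t := le_trans (le_max_right _ _) hnt
      rw [Finset.mem_coe, Finset.mem_product]
      constructor
      · rw [hAdef, Finset.mem_sdiff]
        constructor
        · rw [Finset.mem_product]
          constructor <;> rw [Finset.mem_Icc] <;>
            [exact ⟨neg_le_of_abs_le h1, le_of_abs_le h1⟩;
             exact ⟨neg_le_of_abs_le h2, le_of_abs_le h2⟩]
        · intro hin
          have hin' : (-(m:ℤ)+1 ≤ x.1 ∧ x.1 ≤ (m:ℤ)-1) ∧ (-(m:ℤ)+1 ≤ x.2.1 ∧ x.2.1 ≤ (m:ℤ)-1) := by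
            simpa [Finset.mem_product, Finset.mem_Icc] using hin
          obtain ⟨⟨l1, r1⟩, l2, r2⟩ := hin'
          have e1 : |x.1| ≤ (m:ℤ) - 1 := abs_le.mpr ⟨by omega, by omega⟩
          have e2 : |x.2.1| ≤ (m:ℤ) - 1 := abs_le.mpr ⟨by omega, by omega⟩
          have : max |x.1| |x.2.1| ≤ (m:ℤ) - 1 := max_le e1 e2
          omega
      · rw [hBdef, Finset.mem_product, Finset.mem_Icc, Finset.mem_Icc]
        exact ⟨⟨neg_le_of_abs_le h3, le_of_abs_le h3⟩, ⟨neg_le_of_abs_le h4, le_of_abs_le h4⟩⟩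
    · intro x _ y _ hxy
      simp only [Prod.mk.injEq] at hxy
      obtain ⟨⟨e1, e2⟩, e3, e4⟩ := hxy
      exact Prod.ext e1 (Prod.ext e2 (Prod.ext e3 e4))
  have hcardA : (A.card : ℤ) ≤ 8 * m := by
    rw [hAdef]
    rw [Finset.card_sdiff_of_subset (by
      apply Finset.product_subset_product <;> apply Finset.Icc_subset_Icc <;> omega)]
    rw [Finset.card_product, Finset.card_product, Int.card_Icc, Int.card_Icc]
    have e1 : ((m:ℤ) + 1 - -(m:ℤ)).toNat = 2*m+1 := by omega
    have e2 : ((m:ℤ) - 1 + 1 - (-(m:ℤ)+1)).toNat = 2*m-1 := by omega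
    rw [e1, e2]
    have key : (2*m+1)*(2*m+1) - (2*m-1)*(2*m-1) = 8*m := by
      obtain ⟨k, rfl⟩ : ∃ k, m = k + 1 := ⟨m - 1, by omega⟩
      have h0 : 2*(k+1)-1 = 2*k+1 := by omega
      rw [h0]
      have h1 : (2*(k+1)+1)*(2*(k+1)+1) = 4*k*k+12*k+9 := by ring
      have h2 : (2*k+1)*(2*k+1) = 4*k*k+4*k+1 := by ring
      omega
    rw [key]
    push_cast
    exact le_refl _
  have hcardB : (B.card : ℤ) ≤ (3*t)^2 := by
    rw [hBdef, Finset.card_product, Int.card_Icc]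
    have e1 : (t + 1 - -t).toNat = (2*t+1).toNat := by omega
    rw [e1]
    have e2 : ((2*t+1).toNat : ℤ) = 2*t+1 := by omega
    push_cast
    rw [e2]
    nlinarith
  calc (((T0 W).filter (fun x => (max |x.1| |x.2.1|).toNat = m)).card : ℤ)
      ≤ ((A ×ˢ B).card : ℤ) := by exact_mod_cast hcardle
    _ = (A.card : ℤ) * (B.card : ℤ) := by rw [Finset.card_product]; push_cast; ring
    _ ≤ (8*m) * (3*t)^2 := by
        apply mul_le_mul hcardA hcardB (Int.natCast_nonneg _) (by positivity)
    _ = 72 * m * t^2 := by ring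

lemma countT0 (W : ℤ) (hW : 1 ≤ W) : ((T0 W).card : ℝ) ≤ 144 * (W:ℝ)^2 := by
  have hfib : (T0 W).card = ∑ m ∈ Finset.Icc 1 W.toNat,
      ((T0 W).filter (fun x => (max |x.1| |x.2.1|).toNat = m)).card := by
    apply Finset.card_eq_sum_card_fiberwise
    intro x hx
    rw [T0, Finset.mem_coe, Finset.mem_filter] at hx
    obtain ⟨-, hmx, hnx, hWx⟩ := hx
    simp only [Finset.coe_Icc, Set.mem_Icc]
    have hmW : max |x.1| |x.2.1| ≤ W := by nlinarith
    omega
  rw [hfib]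
  push_cast
  have hterm : ∀ m ∈ Finset.Icc 1 W.toNat,
      ((((T0 W).filter (fun x => (max |x.1| |x.2.1|).toNat = m)).card : ℕ) : ℝ)
        ≤ 72 * (W:ℝ)^2 * (1/(m:ℝ)^2) := by
    intro m hm
    rw [Finset.mem_Icc] at hm
    obtain ⟨hm1, hmW⟩ := hm
    have hfb := fiber_bound W m hm1
    set t : ℤ := W / (m:ℤ)^2 with htdef
    have ht0 : 0 ≤ t := Int.ediv_nonneg (by omega) (by positivity)
    have htR : (t:ℝ) ≤ (W:ℝ)/(m:ℝ)^2 := by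
      have h1 : t * (m:ℤ)^2 ≤ W := by
        rw [htdef]
        exact Int.ediv_mul_le W (by positivity)
      rw [le_div_iff₀ (by positivity : (0:ℝ) < (m:ℝ)^2)]
      exact_mod_cast h1
    have hmR : (1:ℝ) ≤ (m:ℝ) := by exact_mod_cast hm1
    calc ((((T0 W).filter (fun x => (max |x.1| |x.2.1|).toNat = m)).card : ℕ) : ℝ)
        ≤ 72 * (m:ℝ) * (t:ℝ)^2 := by exact_mod_cast hfb
      _ ≤ 72 * (m:ℝ) * ((W:ℝ)/(m:ℝ)^2)^2 := by
          apply mul_le_mul_of_nonneg_left _ (by positivity)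
          apply pow_le_pow_left₀ (by exact_mod_cast ht0) htR
      _ = 72 * (W:ℝ)^2 * (1/(m:ℝ)^2) * (1/(m:ℝ)) := by field_simp
      _ ≤ 72 * (W:ℝ)^2 * (1/(m:ℝ)^2) * 1 := by
          apply mul_le_mul_of_nonneg_left _ (by positivity)
          rw [div_le_one (by positivity)]; exact hmR
      _ = 72 * (W:ℝ)^2 * (1/(m:ℝ)^2) := by ring
  calc (∑ m ∈ Finset.Icc 1 W.toNat,
        ((((T0 W).filter (fun x => (max |x.1| |x.2.1|).toNat = m)).card : ℕ) : ℝ))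
      ≤ ∑ m ∈ Finset.Icc 1 W.toNat, 72 * (W:ℝ)^2 * (1/(m:ℝ)^2) :=
        Finset.sum_le_sum hterm
    _ = 72 * (W:ℝ)^2 * ∑ m ∈ Finset.Icc 1 W.toNat, (1:ℝ)/(m:ℝ)^2 := by
        rw [Finset.mul_sum]
    _ ≤ 72 * (W:ℝ)^2 * 2 := by
        apply mul_le_mul_of_nonneg_left _ (by positivity)
        have := sum_inv_sq W.toNat
        have h2 : (0:ℝ) < (W.toNat:ℝ) + 1 := by positivity
        have : ∑ m ∈ Finset.Icc 1 W.toNat, (1:ℝ)/(m:ℝ)^2 ≤ 2 - 2/((W.toNat:ℝ)+1) := this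
        have hpos : 0 ≤ 2/((W.toNat:ℝ)+1) := by positivity
        linarith
    _ = 144 * (W:ℝ)^2 := by ring
end

open Classical in
/-- The number of integral binary cubic forms with vanishing discriminant and all four
coefficients bounded by `Y` is `O(Y²)`. -/
theorem count_discriminant_zero_cubic_forms :
    ∃ C : ℝ, 0 < C ∧ ∀ Y : ℝ, 1 ≤ Y →
      (({x : ℤ × ℤ × ℤ × ℤ |
          (|x.1| : ℝ) ≤ Y ∧ (|x.2.1| : ℝ) ≤ Y ∧ (|x.2.2.1| : ℝ) ≤ Y ∧
          (|x.2.2.2| : ℝ) ≤ Y ∧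
          x.2.1 ^ 2 * x.2.2.1 ^ 2 - 4 * x.1 * x.2.2.1 ^ 3 - 4 * x.2.1 ^ 3 * x.2.2.2
            - 27 * x.1 ^ 2 * x.2.2.2 ^ 2 + 18 * x.1 * x.2.1 * x.2.2.1 * x.2.2.2
            = 0}.ncard : ℝ)) ≤ C * Y ^ 2 := by
  refine ⟨1 + 144 * 85000^2, by norm_num, ?_⟩
  intro Y hY
  set W : ℤ := ⌊85000 * Y⌋ with hWdef
  have hW1 : (1:ℤ) ≤ W := by
    rw [hWdef, Int.le_floor]
    push_cast
    nlinarith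
  have hWR : (W:ℝ) ≤ 85000 * Y := Int.floor_le _
  have hW0 : (0:ℝ) ≤ (W:ℝ) := by exact_mod_cast le_trans zero_le_one hW1
  set Φ : ℤ×ℤ×ℤ×ℤ → ℤ×ℤ×ℤ×ℤ := fun y =>
    (y.2.1^2*y.2.2.1, y.2.1^2*y.2.2.2 - 2*y.1*y.2.1*y.2.2.1,
     y.1^2*y.2.2.1 - 2*y.1*y.2.1*y.2.2.2, y.1^2*y.2.2.2) with hΦ
  set T : Finset (ℤ×ℤ×ℤ×ℤ) := insert (0,0,0,0) (T0 W) with hT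
  have hsub : {x : ℤ × ℤ × ℤ × ℤ |
          (|x.1| : ℝ) ≤ Y ∧ (|x.2.1| : ℝ) ≤ Y ∧ (|x.2.2.1| : ℝ) ≤ Y ∧
          (|x.2.2.2| : ℝ) ≤ Y ∧
          x.2.1 ^ 2 * x.2.2.1 ^ 2 - 4 * x.1 * x.2.2.1 ^ 3 - 4 * x.2.1 ^ 3 * x.2.2.2
            - 27 * x.1 ^ 2 * x.2.2.2 ^ 2 + 18 * x.1 * x.2.1 * x.2.2.1 * x.2.2.2
            = 0} ⊆ ↑(T.image Φ) := by
    rintro ⟨a, b, c, d⟩ hx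
    simp only [Set.mem_setOf_eq] at hx
    obtain ⟨hba, hbb, hbc, hbd, hdisc⟩ := hx
    have hdisc' : b^2*c^2 - 4*a*c^3 - 4*b^3*d - 27*a^2*d^2 + 18*a*b*c*d = 0 := by
      linear_combination hdisc
    obtain ⟨p, q, e, g, h1, h2, h3, h4⟩ := fact a b c d hdisc'
    by_cases hz : (p = 0 ∧ q = 0) ∨ (e = 0 ∧ g = 0)
    · have hab : a = 0 ∧ b = 0 ∧ c = 0 ∧ d = 0 := by
        rcases hz with ⟨hp, hq⟩ | ⟨he, hg⟩
        · subst hp; subst hq; simp at h1 h2 h3 h4; exact ⟨h1, h2, h3, h4⟩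
        · subst he; subst hg; simp at h1 h2 h3 h4; exact ⟨h1, h2, h3, h4⟩
      obtain ⟨rfl, rfl, rfl, rfl⟩ := hab
      refine Finset.mem_coe.mpr (Finset.mem_image.mpr ⟨(0,0,0,0), Finset.mem_insert_self _ _, ?_⟩)
      simp [hΦ]
    · push_neg at hz
      obtain ⟨hz1, hz2⟩ := hz
      have hm1 : 1 ≤ max |p| |q| := by
        rcases Decidable.em (p = 0) with hp | hp
        · have hq := hz1 hp
          have : 1 ≤ |q| := by rcases abs_cases q with ⟨h, _⟩ | ⟨h, _⟩ <;> omega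
          exact le_trans this (le_max_right _ _)
        · have : 1 ≤ |p| := by rcases abs_cases p with ⟨h, _⟩ | ⟨h, _⟩ <;> omega
          exact le_trans this (le_max_left _ _)
      have hn1 : 1 ≤ max |e| |g| := by
        rcases Decidable.em (e = 0) with he | he
        · have hg := hz2 he
          have : 1 ≤ |g| := by rcases abs_cases g with ⟨h, _⟩ | ⟨h, _⟩ <;> omega
          exact le_trans this (le_max_right _ _)
        · have : 1 ≤ |e| := by rcases abs_cases e with ⟨h, _⟩ | ⟨h, _⟩ <;> omega
          exact le_trans this (le_max_left _ _)
      rw [h1] at hba; rw [h2] at hbb; rw [h3] at hbc; rw [h4] at hbd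
      have hba' : ((|q^2*e| : ℤ) : ℝ) ≤ Y := by exact_mod_cast hba
      have hbb' : ((|q^2*g - 2*p*q*e| : ℤ) : ℝ) ≤ Y := by exact_mod_cast hbb
      have hbc' : ((|p^2*e - 2*p*q*g| : ℤ) : ℝ) ≤ Y := by exact_mod_cast hbc
      have hbd' : ((|p^2*g| : ℤ) : ℝ) ≤ Y := by exact_mod_cast hbd
      have hht := height p q e g Y hba' hbb' hbc' hbd'
      have hWb : (max |p| |q|)^2 * max |e| |g| ≤ W := by
        rw [hWdef]
        exact Int.le_floor.mpr hht
      have hmW : max |p| |q| ≤ W := by nlinarith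
      have hnW : max |e| |g| ≤ W := by
        have hsq1 : 1 ≤ (max |p| |q|)^2 := by nlinarith
        have hmul : 1 * (max |e| |g|) ≤ (max |p| |q|)^2 * (max |e| |g|) :=
          mul_le_mul_of_nonneg_right hsq1 (le_trans zero_le_one hn1)
        linarith
      have hmemT0 : (p, q, e, g) ∈ T0 W := by
        rw [T0, Finset.mem_filter]
        constructor
        · simp only [Finset.mem_product, Finset.mem_Icc]
          have e1 : |p| ≤ W := le_trans (le_max_left _ _) hmW
          have e2 : |q| ≤ W := le_trans (le_max_right _ _) hmW
          have e3 : |e| ≤ W := le_trans (le_max_left _ _) hnW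
          have e4 : |g| ≤ W := le_trans (le_max_right _ _) hnW
          exact ⟨⟨neg_le_of_abs_le e1, le_of_abs_le e1⟩, ⟨neg_le_of_abs_le e2, le_of_abs_le e2⟩,
            ⟨neg_le_of_abs_le e3, le_of_abs_le e3⟩, ⟨neg_le_of_abs_le e4, le_of_abs_le e4⟩⟩
        · exact ⟨hm1, hn1, hWb⟩
      refine Finset.mem_coe.mpr (Finset.mem_image.mpr
        ⟨(p, q, e, g), Finset.mem_insert_of_mem hmemT0, ?_⟩)
      rw [hΦ]
      exact Prod.ext h1.symm (Prod.ext h2.symm (Prod.ext h3.symm h4.symm))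
  have hncard : ({x : ℤ × ℤ × ℤ × ℤ |
          (|x.1| : ℝ) ≤ Y ∧ (|x.2.1| : ℝ) ≤ Y ∧ (|x.2.2.1| : ℝ) ≤ Y ∧
          (|x.2.2.2| : ℝ) ≤ Y ∧
          x.2.1 ^ 2 * x.2.2.1 ^ 2 - 4 * x.1 * x.2.2.1 ^ 3 - 4 * x.2.1 ^ 3 * x.2.2.2
            - 27 * x.1 ^ 2 * x.2.2.2 ^ 2 + 18 * x.1 * x.2.1 * x.2.2.1 * x.2.2.2
            = 0}).ncard ≤ (T.image Φ).card := by
    have h := Set.ncard_le_ncard hsub (Finset.finite_toSet _)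
    rwa [Set.ncard_coe_finset] at h
  have hins : (T.card : ℝ) ≤ 1 + ((T0 W).card : ℝ) := by
    rw [hT]
    have h := Finset.card_insert_le ((0,0,0,0) : ℤ×ℤ×ℤ×ℤ) (T0 W)
    have h' : ((insert ((0:ℤ),(0:ℤ),(0:ℤ),(0:ℤ)) (T0 W)).card : ℝ) ≤ ((T0 W).card : ℝ) + 1 := by
      exact_mod_cast h
    linarith
  calc (({x : ℤ × ℤ × ℤ × ℤ |
          (|x.1| : ℝ) ≤ Y ∧ (|x.2.1| : ℝ) ≤ Y ∧ (|x.2.2.1| : ℝ) ≤ Y ∧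
          (|x.2.2.2| : ℝ) ≤ Y ∧
          x.2.1 ^ 2 * x.2.2.1 ^ 2 - 4 * x.1 * x.2.2.1 ^ 3 - 4 * x.2.1 ^ 3 * x.2.2.2
            - 27 * x.1 ^ 2 * x.2.2.2 ^ 2 + 18 * x.1 * x.2.1 * x.2.2.1 * x.2.2.2
            = 0}.ncard : ℝ))
      ≤ ((T.image Φ).card : ℝ) := by exact_mod_cast hncard
    _ ≤ (T.card : ℝ) := by exact_mod_cast Finset.card_image_le
    _ ≤ 1 + ((T0 W).card : ℝ) := hins
    _ ≤ 1 + 144 * (W:ℝ)^2 := by linarith [countT0 W hW1]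
    _ ≤ 1 + 144 * (85000*Y)^2 := by nlinarith
    _ ≤ (1 + 144 * 85000^2) * Y^2 := by nlinarith
end
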